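/- Let P be a permutation of the tiling R_N of [0,1]^ν that is constant on the coarser tiling R_{1/h} with h = δ^ε (i.e. for each coarse cube K of side δ^ε, every fine cube κ ⊂ K satisfies P(κ) ⊂ K). Then the Shnirelman discrete distance from P to the identity satisfies dist^S_{D_N}(P, Id) ≤ C(ν) δ^ε, where C(ν) depends only on ν. -/

import Mathlib

/-- Two cubes of `R_N` are adjacent if they share a `(ν-1)`-dimensional face. -/
def CubeAdjacent {ν N : ℕ} (κ κ' : Fin ν → Fin N) : Prop :=
  ∃ j, (∀ i, i ≠ j → κ i = κ' i) ∧
    (((κ j : ℕ) + 1 = (κ' j : ℕ)) ∨ ((κ' j : ℕ) + 1 = (κ j : ℕ)))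

/-- An S-elementary movement: an involution simultaneously swapping disjoint pairs of
adjacent cubes. -/
def IsSElem {ν N : ℕ} (S : Equiv.Perm (Fin ν → Fin N)) : Prop :=
  ∀ κ, S (S κ) = κ ∧ (S κ = κ ∨ CubeAdjacent κ (S κ))

/-- The number of pairs simultaneously swapped. -/
def swapCt {ν N : ℕ} (S : Equiv.Perm (Fin ν → Fin N)) : ℕ :=
  (Finset.univ.filter fun κ => S κ ≠ κ).card / 2

open Equiv Equiv.Perm

theorem Equiv.Perm.apply_inv_self {α : Type*} (f : Perm α) (x : α) : f (f⁻¹ x) = x :=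
  f.apply_symm_apply x



section Machinery

variable {G : Type*}

/-- supported in a set -/
def SuppIn (S : Perm G) (A : Set G) : Prop := ∀ x, x ∉ A → S x = x

/-- a round of simultaneous disjoint adjacent swaps -/
def IsRound (adj : G → G → Prop) (S : Perm G) : Prop :=
  ∀ x, S (S x) = x ∧ (S x = x ∨ adj x (S x))

/-- realizable by a flow of exactly R rounds, all supported in A -/
def Routable (adj : G → G → Prop) (A : Set G) (R : ℕ) (σ : Perm G) : Prop :=
  ∃ L : List (Perm G), L.length = R ∧ (∀ S ∈ L, IsRound adj S ∧ SuppIn S A) ∧ L.prod = σ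

variable {adj : G → G → Prop} {A B : Set G} {R R' : ℕ} {σ τ : Perm G}

lemma isRound_one : IsRound adj (1 : Perm G) := fun x => ⟨rfl, Or.inl rfl⟩

lemma suppIn_one : SuppIn (1 : Perm G) A := fun x _ => rfl

lemma suppIn_mono (h : A ⊆ B) (hs : SuppIn σ A) : SuppIn σ B := fun x hx => hs x (fun h' => hx (h h'))

lemma routable_one : Routable adj A R (1 : Perm G) := by
  refine ⟨List.replicate R 1, List.length_replicate, ?_, by rw [List.prod_replicate, one_pow]⟩
  intro S hS
  rw [List.mem_replicate] at hS
  exact hS.2 ▸ ⟨isRound_one, suppIn_one⟩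

lemma Routable.mono (h : A ⊆ B) : Routable adj A R σ → Routable adj B R σ := by
  rintro ⟨L, h1, h2, h3⟩
  exact ⟨L, h1, fun S hS => ⟨(h2 S hS).1, suppIn_mono h (h2 S hS).2⟩, h3⟩

lemma Routable.pad (hR : R ≤ R') (h : Routable adj A R σ) : Routable adj A R' σ := by
  obtain ⟨L, h1, h2, h3⟩ := h
  refine ⟨L ++ List.replicate (R' - R) 1, ?_, ?_, ?_⟩
  · simp [h1, List.length_replicate]; omega
  · intro S hS
    rcases List.mem_append.mp hS with h' | h'
    · exact h2 S h'
    · rw [List.mem_replicate] at h'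
      exact h'.2 ▸ ⟨isRound_one, suppIn_one⟩
  · rw [List.prod_append, h3, List.prod_replicate, one_pow, mul_one]

lemma Routable.mul_append (h1 : Routable adj A R σ) (h2 : Routable adj A R' τ) :
    Routable adj A (R + R') (σ * τ) := by
  obtain ⟨L1, a1, a2, a3⟩ := h1
  obtain ⟨L2, b1, b2, b3⟩ := h2
  refine ⟨L1 ++ L2, by simp [a1, b1], ?_, by rw [List.prod_append, a3, b3]⟩
  intro S hS
  rcases List.mem_append.mp hS with h' | h'
  exacts [a2 S h', b2 S h']

/-- a perm supported in A maps A-points to A-points -/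
lemma SuppIn.mem_of_move (hs : SuppIn σ A) {x : G} (hx : σ x ≠ x) : σ x ∈ A := by
  by_contra h
  have := hs (σ x) h
  exact hx (σ.injective this)

lemma commute_of_disjoint_supp (hU : SuppIn σ A) (hV : SuppIn τ B) (hAB : Disjoint A B) :
    ∀ x, σ (τ x) = τ (σ x) := by
  intro x
  by_cases h1 : σ x = x
  · by_cases h2 : τ x = x
    · rw [h1, h2, h1]
    · have hB : τ x ∈ B := hV.mem_of_move h2
      have hnA : τ x ∉ A := fun h => hAB.ne_of_mem h hB rfl
      rw [h1, hU _ hnA]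
  · -- σ x ≠ x ⇒ x ∈ A and σ x ∈ A; so τ fixes x and σ x
    have hxA : x ∈ A := by
      by_contra h; exact h1 (hU x h)
    have hsA : σ x ∈ A := hU.mem_of_move h1
    have h2 : τ x = x := hV x (fun h => hAB.ne_of_mem hxA h rfl)
    have h3 : τ (σ x) = σ x := hV _ (fun h => hAB.ne_of_mem hsA h rfl)
    rw [h2, h3]

lemma suppIn_mul (h1 : SuppIn σ A) (h2 : SuppIn τ B) : SuppIn (σ * τ) (A ∪ B) := by
  intro x hx
  have hxA : x ∉ A := fun h => hx (Or.inl h)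
  have hxB : x ∉ B := fun h => hx (Or.inr h)
  simp [Perm.mul_apply, h2 x hxB, h1 x hxA]

lemma isRound_mul_of_disjoint (hS : IsRound adj σ) (hT : IsRound adj τ)
    (h1 : SuppIn σ A) (h2 : SuppIn τ B) (hAB : Disjoint A B) : IsRound adj (σ * τ) := by
  have c := commute_of_disjoint_supp h1 h2 hAB
  intro x
  constructor
  · have : σ (τ (σ (τ x))) = σ (σ (τ (τ x))) := by rw [c (τ x)]
    simp only [Perm.mul_apply]
    rw [this, (hT x).1, (hS x).1]
  · by_cases h : τ x = x
    · simp only [Perm.mul_apply, h]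
      exact (hS x).2
    · have hB : τ x ∈ B := h2.mem_of_move h
      have : σ (τ x) = τ x := h1 _ (fun hh => hAB.ne_of_mem hh hB rfl)
      simp only [Perm.mul_apply, this]
      exact (hT x).2

lemma suppIn_list_prod {L : List (Perm G)} (h : ∀ S ∈ L, SuppIn S A) : SuppIn L.prod A := by
  induction L with
  | nil => exact suppIn_one
  | cons S L ih =>
    rw [List.prod_cons]
    have := suppIn_mul (h S (List.mem_cons_self)) (ih (fun T hT => h T (List.mem_cons_of_mem _ hT)))
    rwa [Set.union_self] at this

/-- parallel combination of two routings with disjoint supports -/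
lemma routable_parallel₂ (hAB : Disjoint A B) (h1 : Routable adj A R σ) (h2 : Routable adj B R τ) :
    Routable adj (A ∪ B) R (σ * τ) := by
  obtain ⟨L1, a1, a2, a3⟩ := h1
  obtain ⟨L2, b1, b2, b3⟩ := h2
  subst a3 b3 a1
  induction L1 generalizing L2 with
  | nil =>
    rw [List.length_nil, List.length_eq_zero_iff] at b1
    subst b1
    simpa using (routable_one : Routable adj (A ∪ B) 0 1)
  | cons S L ih =>
    cases L2 with
    | nil => simp at b1
    | cons T L2' =>
      rw [List.length_cons, List.length_cons] at b1
      have hlen : L.length = L2'.length := by omega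
      have hS := a2 S (List.mem_cons_self)
      have hT := b2 T (List.mem_cons_self)
      obtain ⟨L', c1, c2, c3⟩ := ih
        (fun U hU => a2 U (List.mem_cons_of_mem _ hU)) L2'
        (fun U hU => b2 U (List.mem_cons_of_mem _ hU)) hlen.symm
      refine ⟨(S * T) :: L', by simp [c1], ?_, ?_⟩
      · intro U hU
        rcases List.mem_cons.mp hU with h | h
        · subst h
          exact ⟨isRound_mul_of_disjoint hS.1 hT.1 hS.2 hT.2 hAB,
            suppIn_mul hS.2 hT.2⟩
        · exact c2 U h
      · rw [List.prod_cons, c3, List.prod_cons, List.prod_cons]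
        have hc : Commute T L.prod := by
          apply Equiv.ext
          intro x
          exact commute_of_disjoint_supp hT.2
            (suppIn_list_prod (fun U hU => (a2 U (List.mem_cons_of_mem _ hU)).2)) hAB.symm x
        calc S * T * (L.prod * L2'.prod) = S * (T * L.prod) * L2'.prod := by
              rw [mul_assoc, mul_assoc, mul_assoc]
            _ = S * (L.prod * T) * L2'.prod := by rw [hc.eq]
            _ = S * L.prod * (T * L2'.prod) := by rw [mul_assoc, mul_assoc, mul_assoc]

end Machinery

section Swaps
variable {G : Type*} [DecidableEq G] {adj : G → G → Prop}

/-- the permutation given by a list of simultaneous swaps -/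
def swapsOf (ps : List (G × G)) : Perm G := (ps.map fun p => Equiv.swap p.1 p.2).prod

/-- the points touched -/
def ptsOf (ps : List (G × G)) : List G := ps.flatMap fun p => [p.1, p.2]

lemma mem_ptsOf {ps : List (G × G)} {x : G} :
    x ∈ ptsOf ps ↔ ∃ p ∈ ps, x = p.1 ∨ x = p.2 := by
  simp [ptsOf, List.mem_flatMap, eq_comm]

lemma swapsOf_cons (p : G × G) (ps : List (G × G)) :
    swapsOf (p :: ps) = Equiv.swap p.1 p.2 * swapsOf ps := by
  simp [swapsOf]

lemma swapsOf_apply_of_notmem (ps : List (G × G)) {x : G} (hx : x ∉ ptsOf ps) :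
    swapsOf ps x = x := by
  induction ps with
  | nil => rfl
  | cons p ps ih =>
    have h1 : x ∉ ptsOf ps := fun h => hx (by
      rcases mem_ptsOf.mp h with ⟨q, hq, hq'⟩
      exact mem_ptsOf.mpr ⟨q, List.mem_cons_of_mem _ hq, hq'⟩)
    have h2 : x ≠ p.1 := fun h => hx (mem_ptsOf.mpr ⟨p, List.mem_cons_self, Or.inl h⟩)
    have h3 : x ≠ p.2 := fun h => hx (mem_ptsOf.mpr ⟨p, List.mem_cons_self, Or.inr h⟩)
    rw [swapsOf_cons, Perm.mul_apply, ih h1, Equiv.swap_apply_of_ne_of_ne h2 h3]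

lemma swapsOf_apply_pair {ps : List (G × G)} (hnd : (ptsOf ps).Nodup) {p : G × G} (hp : p ∈ ps) :
    swapsOf ps p.1 = p.2 ∧ swapsOf ps p.2 = p.1 := by
  induction ps with
  | nil => simp at hp
  | cons q ps ih =>
    have hnd' : (ptsOf ps).Nodup := by
      simp only [ptsOf, List.flatMap_cons] at hnd
      exact (List.nodup_append'.mp hnd).2.1
    have hq1 : q.1 ∉ ptsOf ps := by
      simp only [ptsOf, List.flatMap_cons] at hnd
      have := (List.nodup_append'.mp hnd).2.2
      intro h; exact this (by simp) h
    have hq2 : q.2 ∉ ptsOf ps := by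
      simp only [ptsOf, List.flatMap_cons] at hnd
      have := (List.nodup_append'.mp hnd).2.2
      intro h; exact this (by simp) h
    have hq12 : q.1 ≠ q.2 := by
      simp only [ptsOf, List.flatMap_cons] at hnd
      have := (List.nodup_append'.mp hnd).1
      simpa using this
    rcases List.mem_cons.mp hp with h | h
    · subst h
      constructor
      · rw [swapsOf_cons, Perm.mul_apply, swapsOf_apply_of_notmem _ hq1, Equiv.swap_apply_left]
      · rw [swapsOf_cons, Perm.mul_apply, swapsOf_apply_of_notmem _ hq2, Equiv.swap_apply_right]
    · have h1 : p.1 ∈ ptsOf ps := mem_ptsOf.mpr ⟨p, h, Or.inl rfl⟩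
      have h2 : p.2 ∈ ptsOf ps := mem_ptsOf.mpr ⟨p, h, Or.inr rfl⟩
      obtain ⟨e1, e2⟩ := ih hnd' h
      constructor
      · rw [swapsOf_cons, Perm.mul_apply, e1,
          Equiv.swap_apply_of_ne_of_ne (fun hh => hq1 (by rw [← hh]; exact h2))
            (fun hh => hq2 (by rw [← hh]; exact h2))]
      · rw [swapsOf_cons, Perm.mul_apply, e2,
          Equiv.swap_apply_of_ne_of_ne (fun hh => hq1 (by rw [← hh]; exact h1))
            (fun hh => hq2 (by rw [← hh]; exact h1))]

lemma isRound_swapsOf {ps : List (G × G)} (hnd : (ptsOf ps).Nodup)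
    (hadj : ∀ p ∈ ps, adj p.1 p.2) (hsym : ∀ x y, adj x y → adj y x) :
    IsRound adj (swapsOf ps) := by
  intro x
  by_cases hx : x ∈ ptsOf ps
  · rcases mem_ptsOf.mp hx with ⟨p, hp, h | h⟩
    · subst h
      obtain ⟨e1, e2⟩ := swapsOf_apply_pair hnd hp
      rw [e1, e2]
      exact ⟨rfl, Or.inr (hadj p hp)⟩
    · subst h
      obtain ⟨e1, e2⟩ := swapsOf_apply_pair hnd hp
      rw [e2, e1]
      exact ⟨rfl, Or.inr (hsym _ _ (hadj p hp))⟩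
  · rw [swapsOf_apply_of_notmem _ hx, swapsOf_apply_of_notmem _ hx]
    exact ⟨rfl, Or.inl rfl⟩

end Swaps

section ListParallel
variable {G : Type*} {adj : G → G → Prop} {R : ℕ}

lemma routable_list_parallel {I : Type*} (l : List I) (A : I → Set G) (σs : I → Perm G)
    (hdisj : l.Pairwise (fun i j => Disjoint (A i) (A j)))
    (h : ∀ i ∈ l, Routable adj (A i) R (σs i)) :
    Routable adj (⋃ i ∈ l, A i) R ((l.map σs).prod) := by
  induction l with
  | nil => simpa using (routable_one : Routable adj _ R 1)
  | cons i l ih =>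
    rw [List.map_cons, List.prod_cons]
    have hd : Disjoint (A i) (⋃ j ∈ l, A j) := by
      rw [Set.disjoint_iUnion₂_right]
      intro j hj
      exact (List.pairwise_cons.mp hdisj).1 j hj
    have := routable_parallel₂ hd (h i (List.mem_cons_self))
      (ih (List.pairwise_cons.mp hdisj).2 (fun j hj => h j (List.mem_cons_of_mem _ hj)))
    have heq : (⋃ j ∈ i :: l, A j) = A i ∪ ⋃ j ∈ l, A j := by
      ext x
      simp only [Set.mem_iUnion, Set.mem_union, List.mem_cons]
      constructor
      · rintro ⟨j, hj | hj, hx⟩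
        · exact Or.inl (hj ▸ hx)
        · exact Or.inr ⟨j, hj, hx⟩
      · rintro (hx | ⟨j, hj, hx⟩)
        · exact ⟨i, Or.inl rfl, hx⟩
        · exact ⟨j, Or.inr hj, hx⟩
    rwa [← heq] at this

end ListParallel
section Transport
variable {G : Type*}

lemma routable_extendDomain {H : Type*} {adjG : G → G → Prop} {adjH : H → H → Prop}
    {p : G → Prop} [DecidablePred p] (e : H ≃ Subtype p)
    (hadj : ∀ h h', adjH h h' → adjG (e h : G) (e h' : G))
    {R : ℕ} {τ : Perm H} (h : Routable adjH Set.univ R τ) :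
    Routable adjG {x | p x} R (τ.extendDomain e) := by
  obtain ⟨L, h1, h2, h3⟩ := h
  refine ⟨L.map (fun S => S.extendDomain e), by simp [h1], ?_, ?_⟩
  · intro S hS
    rw [List.mem_map] at hS
    obtain ⟨T, hT, rfl⟩ := hS
    have hrT := (h2 T hT).1
    have hinv : T * T = 1 := Equiv.ext fun x => (hrT x).1
    constructor
    · intro x
      refine ⟨?_, ?_⟩
      · have heq : T.extendDomain e (T.extendDomain e x)
            = (T.extendDomain e * T.extendDomain e) x := rfl
        rw [heq, Perm.extendDomain_mul, hinv, Perm.extendDomain_one, Perm.one_apply]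
      · by_cases hx : p x
        · rw [Perm.extendDomain_apply_subtype _ e hx]
          rcases (hrT (e.symm ⟨x, hx⟩)).2 with h' | h'
          · rw [h']; left; simp
          · right
            have := hadj _ _ h'
            simpa using this
        · rw [Perm.extendDomain_apply_not_subtype _ e hx]
          exact Or.inl rfl
    · intro x hx
      exact Perm.extendDomain_apply_not_subtype _ e hx
  · rw [← h3]
    exact List.prod_hom L (Perm.extendDomainHom e)

lemma routable_fiber {I : Type*} [Fintype I] [DecidableEq I]
    {adjG : G → G → Prop} (f : G → I)
    (σ : Perm G) (hσ : ∀ x, f (σ x) = f x) (R : ℕ)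
    (H : I → Type*) (adjH : ∀ i, H i → H i → Prop)
    (e : ∀ i, H i ≃ {x : G // f x = i})
    (hadj : ∀ i h h', adjH i h h' → adjG ((e i h : G)) ((e i h' : G)))
    (hr : ∀ i (hp : ∀ x, f x = i ↔ f (σ x) = i), Routable (adjH i) Set.univ R
      ((e i).permCongr.symm (σ.subtypePerm (fun x => (hp x).symm)))) :
    Routable adjG Set.univ R σ := by
  have hp : ∀ i, ∀ x : G, f x = i ↔ f (σ x) = i := fun i x => by rw [hσ]
  set σs : I → Perm G :=
    fun i => ((e i).permCongr.symm (σ.subtypePerm (fun x => (hp i x).symm))).extendDomain (e i) with hσs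
  have happ : ∀ i x, σs i x = if f x = i then σ x else x := by
    intro i x
    by_cases hx : f x = i
    · rw [if_pos hx, hσs]
      rw [Perm.extendDomain_apply_subtype _ (e i) hx]
      simp [Equiv.permCongr_symm_apply, Perm.subtypePerm_apply]
    · rw [if_neg hx, hσs]
      exact Perm.extendDomain_apply_not_subtype _ (e i) hx
  have hrout : ∀ i, Routable adjG {x | f x = i} R (σs i) :=
    fun i => routable_extendDomain (e i) (hadj i) (hr i (hp i))
  set l := (Finset.univ : Finset I).toList with hl
  have hnd : l.Nodup := Finset.nodup_toList _
  have hdisj : ∀ {i j : I}, i ≠ j → Disjoint {x : G | f x = i} {x : G | f x = j} := by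
    intro i j hij
    rw [Set.disjoint_left]
    rintro x (hx : f x = i) (hx' : f x = j)
    exact hij (hx ▸ hx')
  have hpar := routable_list_parallel l (fun i => {x | f x = i}) σs
    (hnd.imp (fun h => hdisj h)) (fun i _ => hrout i)
  have hmem : ∀ x : G, f x ∈ l := fun x => Finset.mem_toList.mpr (Finset.mem_univ _)
  have hprod : ∀ (l' : List I), l'.Nodup → ∀ x, (l'.map σs).prod x = if f x ∈ l' then σ x else x := by
    intro l' hl'
    induction l' with
    | nil => intro x; simp
    | cons i l' ih =>
      intro x
      rw [List.map_cons, List.prod_cons, Perm.mul_apply,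
        ih (List.nodup_cons.mp hl').2 x]
      by_cases hx : f x = i
      · have : f x ∉ l' := fun h => (List.nodup_cons.mp hl').1 (hx ▸ h)
        rw [if_neg this, happ, if_pos hx, if_pos (List.mem_cons.mpr (Or.inl hx))]
      · by_cases hx' : f x ∈ l'
        · rw [if_pos hx', happ]
          have : f (σ x) ≠ i := by rw [hσ]; exact hx
          rw [if_neg this, if_pos (List.mem_cons.mpr (Or.inr hx'))]
        · rw [if_neg hx', happ, if_neg hx,
            if_neg (fun h => (List.mem_cons.mp h).elim hx hx')]
  have hfin : (l.map σs).prod = σ := by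
    apply Equiv.ext
    intro x
    rw [hprod l hnd x, if_pos (hmem x)]
  rw [hfin] at hpar
  exact hpar.mono (Set.subset_univ _)

end Transport
section Tasep

/-- adjacency on a line -/
def LineAdj (n : ℕ) (i j : Fin n) : Prop := (i : ℕ) + 1 = (j : ℕ) ∨ (j : ℕ) + 1 = (i : ℕ)

lemma lineAdj_symm {n : ℕ} (i j : Fin n) : LineAdj n i j → LineAdj n j i := Or.symm

/-- clamped element of `Fin (n+1)` -/
def mkF (n a : ℕ) : Fin (n + 1) := ⟨min a n, by omega⟩

lemma mkF_val {n a : ℕ} (h : a ≤ n) : (mkF n a : ℕ) = a := by simp [mkF]; omega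

/-- trajectory of the `k`-th (0-indexed) rightmost marked particle at time `t` -/
def tasepX (n : ℕ) (x0 : ℕ → ℕ) (t k : ℕ) : ℕ := min (n - k) (x0 k + (t - k))

/-- the simultaneous swaps performed at time `t` -/
def tasepPs (n s : ℕ) (x0 : ℕ → ℕ) (t : ℕ) : List (Fin (n + 1) × Fin (n + 1)) :=
  ((List.range s).filter (fun k => tasepX n x0 (t + 1) k = tasepX n x0 t k + 1)).map
    (fun k => (mkF n (tasepX n x0 t k + 1), mkF n (tasepX n x0 t k)))

def tasepW (n s : ℕ) (x0 : ℕ → ℕ) (t : ℕ) : Equiv.Perm (Fin (n + 1)) :=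
  swapsOf (tasepPs n s x0 t)

def tasepPerm (n s : ℕ) (x0 : ℕ → ℕ) (T : ℕ) : Equiv.Perm (Fin (n + 1)) :=
  (((List.range T).map (tasepW n s x0)).reverse).prod

variable {n s : ℕ} {x0 : ℕ → ℕ}

section withHyp
variable (hanti : ∀ k, k + 1 < s → x0 (k + 1) < x0 k) (hbound : ∀ k, k < s → x0 k ≤ n)
include hanti hbound

lemma tasep_key : ∀ k, k < s → x0 k + k ≤ n := by
  intro k
  induction k with
  | zero => intro h; simpa using hbound 0 h
  | succ k ih =>
    intro h
    have h1 := hanti k h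
    have h2 := ih (by omega)
    omega

omit hbound in
lemma tasep_chain : ∀ j, j < s → ∀ k, k ≤ j → x0 j + (j - k) ≤ x0 k := by
  intro j
  induction j with
  | zero =>
    intro _ k hk
    have : k = 0 := by omega
    subst this
    omega
  | succ j ih =>
    intro hj k hk
    rcases Nat.eq_or_lt_of_le hk with h | h
    · subst h
      omega
    · have h1 := hanti j hj
      have h2 := ih (by omega) k (by omega)
      omega

lemma tasepX_zero {k : ℕ} (hk : k < s) : tasepX n x0 0 k = x0 k := by
  have := tasep_key hanti hbound k hk
  simp only [tasepX]
  omega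

lemma tasep_mover {t k : ℕ} (hk : k < s) (hm : tasepX n x0 (t + 1) k = tasepX n x0 t k + 1) :
    k ≤ t ∧ tasepX n x0 t k = x0 k + (t - k) ∧ tasepX n x0 t k + 1 ≤ n - k := by
  have h2 := tasep_key hanti hbound k hk
  simp only [tasepX] at hm ⊢
  omega

/-- a mover's pair lies strictly below all earlier particles -/
lemma tasep_sep {t k k' : ℕ} (hkk' : k < k') (hk' : k' < s)
    (hm : tasepX n x0 (t + 1) k' = tasepX n x0 t k' + 1) :
    tasepX n x0 t k' + 1 < tasepX n x0 t k := by
  have h1 := tasep_mover hanti hbound hk' hm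
  have h2 := tasep_chain hanti k' hk' k (by omega)
  have h3 := tasep_key hanti hbound k' hk'
  have h4 := tasep_key hanti hbound k (by omega)
  simp only [tasepX] at h1 ⊢
  omega

omit hanti hbound in
lemma tasep_mem_ps {t : ℕ} {p : Fin (n+1) × Fin (n+1)} :
    p ∈ tasepPs n s x0 t ↔ ∃ k, k < s ∧ tasepX n x0 (t + 1) k = tasepX n x0 t k + 1 ∧
      p = (mkF n (tasepX n x0 t k + 1), mkF n (tasepX n x0 t k)) := by
  simp only [tasepPs, List.mem_map, List.mem_filter, List.mem_range, decide_eq_true_eq]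
  constructor
  · rintro ⟨k, ⟨h1, h2⟩, h3⟩; exact ⟨k, h1, h2, h3.symm⟩
  · rintro ⟨k, h1, h2, h3⟩; exact ⟨k, ⟨h1, h2⟩, h3.symm⟩

lemma tasep_pts_pairwise (t : ℕ) :
    (ptsOf (tasepPs n s x0 t)).Pairwise (fun a b : Fin (n+1) => (b : ℕ) < (a : ℕ)) := by
  have heq : ptsOf (tasepPs n s x0 t)
      = ((List.range s).filter (fun k => tasepX n x0 (t + 1) k = tasepX n x0 t k + 1)).flatMap
        (fun k => [mkF n (tasepX n x0 t k + 1), mkF n (tasepX n x0 t k)]) := by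
    simp [ptsOf, tasepPs, List.flatMap_map]
  rw [heq, List.pairwise_flatMap]
  have hmem : ∀ k ∈ (List.range s).filter
      (fun k => tasepX n x0 (t + 1) k = tasepX n x0 t k + 1),
      k < s ∧ tasepX n x0 (t + 1) k = tasepX n x0 t k + 1 := by
    intro k hk
    rw [List.mem_filter, List.mem_range] at hk
    exact ⟨hk.1, by simpa using hk.2⟩
  constructor
  · intro k hk
    obtain ⟨hks, hm⟩ := hmem k hk
    have hb := (tasep_mover hanti hbound hks hm).2.2
    refine List.pairwise_cons.mpr ⟨?_, List.pairwise_singleton _ _⟩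
    intro y hy
    rw [List.mem_singleton] at hy
    subst hy
    rw [mkF_val (by omega), mkF_val (by omega)]
    omega
  · have hlt : ((List.range s).filter
        (fun k => tasepX n x0 (t + 1) k = tasepX n x0 t k + 1)).Pairwise (· < ·) :=
      (List.pairwise_lt_range (n := s)).filter _
    rw [List.Pairwise.and_mem] at hlt
    refine hlt.imp ?_
    rintro k k' ⟨hk, hk', hlt'⟩
    obtain ⟨hks, hkm⟩ := hmem k hk
    obtain ⟨hks', hkm'⟩ := hmem k' hk'
    have hsep := tasep_sep hanti hbound hlt' hks' hkm'
    have hb := (tasep_mover hanti hbound hks hkm).2.2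
    have hb' := (tasep_mover hanti hbound hks' hkm').2.2
    intro x hx y hy
    rw [List.mem_cons, List.mem_singleton] at hx hy
    have hxv : (x : ℕ) = tasepX n x0 t k + 1 ∨ (x : ℕ) = tasepX n x0 t k := by
      rcases hx with h | h <;> subst h
      · exact Or.inl (mkF_val (by omega))
      · exact Or.inr (mkF_val (by omega))
    have hyv : (y : ℕ) = tasepX n x0 t k' + 1 ∨ (y : ℕ) = tasepX n x0 t k' := by
      rcases hy with h | h <;> subst h
      · exact Or.inl (mkF_val (by omega))
      · exact Or.inr (mkF_val (by omega))
    omega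

lemma tasep_pts_nodup (t : ℕ) : (ptsOf (tasepPs n s x0 t)).Nodup :=
  (tasep_pts_pairwise hanti hbound t).imp (fun h e => by rw [e] at h; exact lt_irrefl _ h)

lemma tasep_isRound (t : ℕ) : IsRound (LineAdj (n+1)) (tasepW n s x0 t) := by
  apply isRound_swapsOf (tasep_pts_nodup hanti hbound t) ?_ lineAdj_symm
  intro p hp
  obtain ⟨k, hk, hm, rfl⟩ := tasep_mem_ps.mp hp
  have hb := (tasep_mover hanti hbound hk hm).2.2
  have hv : ((mkF n (tasepX n x0 t k)) : ℕ) + 1 = ((mkF n (tasepX n x0 t k + 1)) : ℕ) := by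
    rw [mkF_val (by omega), mkF_val (by omega)]
  exact Or.inr hv

/-- the round moves particle `k` from `X t k` to `X (t+1) k` -/
lemma tasep_round_apply (t : ℕ) {k : ℕ} (hk : k < s) :
    tasepW n s x0 t (mkF n (tasepX n x0 t k)) = mkF n (tasepX n x0 (t+1) k) := by
  by_cases hm : tasepX n x0 (t + 1) k = tasepX n x0 t k + 1
  · have hpair : (mkF n (tasepX n x0 t k + 1), mkF n (tasepX n x0 t k)) ∈ tasepPs n s x0 t :=
      tasep_mem_ps.mpr ⟨k, hk, hm, rfl⟩
    have h2 : swapsOf (tasepPs n s x0 t) (mkF n (tasepX n x0 t k))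
        = mkF n (tasepX n x0 t k + 1) :=
      (swapsOf_apply_pair (tasep_pts_nodup hanti hbound t) hpair).2
    rw [tasepW, h2, hm]
  · have hstep : tasepX n x0 (t+1) k = tasepX n x0 t k := by
      simp only [tasepX] at hm ⊢
      omega
    rw [hstep, tasepW]
    apply swapsOf_apply_of_notmem
    intro hmem
    rcases mem_ptsOf.mp hmem with ⟨p, hp, hor⟩
    obtain ⟨k', hk', hm', rfl⟩ := tasep_mem_ps.mp hp
    dsimp only at hor
    have hb' := (tasep_mover hanti hbound hk' hm').2.2
    have hkk' : k ≠ k' := fun h => hm (h ▸ hm')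
    have hXk : tasepX n x0 t k ≤ n := by simp only [tasepX]; omega
    have hval : tasepX n x0 t k = tasepX n x0 t k' + 1 ∨ tasepX n x0 t k = tasepX n x0 t k' := by
      rcases hor with h | h
      · left
        have := congrArg Fin.val h
        rwa [mkF_val hXk, mkF_val (by omega)] at this
      · right
        have := congrArg Fin.val h
        rwa [mkF_val hXk, mkF_val (by omega)] at this
    rcases Nat.lt_or_ge k k' with hlt | hge
    · have := tasep_sep hanti hbound hlt hk' hm'
      omega
    · have hlt' : k' < k := by omega
      have h1 := tasep_chain hanti k hk k' (by omega)
      have h2 := tasep_key hanti hbound k hk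
      have h3 := tasep_key hanti hbound k' hk'
      simp only [tasepX] at hval ⊢
      omega

omit hanti hbound in
lemma tasepPerm_succ (T : ℕ) :
    tasepPerm n s x0 (T + 1) = tasepW n s x0 T * tasepPerm n s x0 T := by
  rw [tasepPerm, tasepPerm, List.range_succ, List.map_append, List.reverse_append]
  simp

lemma tasep_traj (T : ℕ) {k : ℕ} (hk : k < s) :
    tasepPerm n s x0 T (mkF n (x0 k)) = mkF n (tasepX n x0 T k) := by
  induction T with
  | zero =>
    rw [tasepX_zero hanti hbound hk]
    rfl
  | succ T ih =>
    rw [tasepPerm_succ, Equiv.Perm.mul_apply, ih, tasep_round_apply hanti hbound T hk]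

lemma tasep_final {k : ℕ} (hk : k < s) :
    tasepPerm n s x0 (n + 1) (mkF n (x0 k)) = mkF n (n - k) := by
  rw [tasep_traj hanti hbound (n+1) hk]
  congr 1
  have := tasep_key hanti hbound k hk
  simp only [tasepX]
  omega

lemma tasep_routable :
    Routable (LineAdj (n+1)) Set.univ (n+1) (tasepPerm n s x0 (n+1)) := by
  refine ⟨((List.range (n+1)).map (tasepW n s x0)).reverse, by simp, ?_, rfl⟩
  intro S hS
  rw [List.mem_reverse, List.mem_map] at hS
  obtain ⟨t, _, rfl⟩ := hS
  exact ⟨tasep_isRound hanti hbound t, fun x hx => absurd (Set.mem_univ x) hx⟩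

end withHyp
end Tasep
section Line

lemma card_filter_comp_perm {n : ℕ} (σ : Equiv.Perm (Fin n)) (p : Fin n → Prop)
    [DecidablePred p] :
    (Finset.univ.filter fun i => p (σ i)).card = (Finset.univ.filter p).card := by
  apply Finset.card_bij (fun i _ => σ i)
  · intro i hi
    rw [Finset.mem_filter] at hi ⊢
    exact ⟨Finset.mem_univ _, hi.2⟩
  · intro i _ j _ hij
    exact σ.injective hij
  · intro j hj
    rw [Finset.mem_filter] at hj
    refine ⟨σ⁻¹ j, ?_, by simp⟩
    rw [Finset.mem_filter]
    simpa using hj.2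

lemma card_filter_lt_val {n h : ℕ} (hh : h ≤ n) :
    (Finset.univ.filter fun j : Fin n => (j : ℕ) < h).card = h := by
  have heq : (Finset.univ.filter fun j : Fin n => (j : ℕ) < h)
      = Finset.map (Fin.castLEEmb hh) Finset.univ := by
    ext j
    simp only [Finset.mem_filter, Finset.mem_univ, true_and]
    constructor
    · intro hj
      rw [Finset.mem_map]
      exact ⟨⟨(j : ℕ), hj⟩, Finset.mem_univ _, Fin.ext (by simp [Fin.castLEEmb])⟩
    · intro hj
      rw [Finset.mem_map] at hj
      obtain ⟨k, _, rfl⟩ := hj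
      simpa using k.2
  rw [heq, Finset.card_map, Finset.card_univ, Fintype.card_fin]

lemma card_filter_le_val {n h : ℕ} (hh : h ≤ n) :
    (Finset.univ.filter fun j : Fin n => h ≤ (j : ℕ)).card = n - h := by
  have hsplit := Finset.card_filter_add_card_filter_not
    (s := (Finset.univ : Finset (Fin n))) (p := fun j : Fin n => (j : ℕ) < h)
  rw [card_filter_lt_val hh, Finset.card_univ, Fintype.card_fin] at hsplit
  have heq : (Finset.univ.filter fun j : Fin n => ¬ ((j : ℕ) < h))
      = (Finset.univ.filter fun j : Fin n => h ≤ (j : ℕ)) := by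
    apply Finset.filter_congr
    intro j _
    simp [Nat.not_lt]
  rw [heq] at hsplit
  omega

/-- decreasing enumeration of a finset -/
def sepX0 {n : ℕ} (M : Finset (Fin (n + 1))) (k : ℕ) : ℕ :=
  if h : k < M.card
  then ((M.orderIsoOfFin rfl ⟨M.card - 1 - k, by omega⟩ : Fin (n + 1)) : ℕ)
  else 0

lemma sepX0_pos {n : ℕ} (M : Finset (Fin (n + 1))) {k : ℕ} (hk : k < M.card) :
    sepX0 M k = ((M.orderIsoOfFin rfl ⟨M.card - 1 - k, by omega⟩ : Fin (n + 1)) : ℕ) := by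
  unfold sepX0
  rw [dif_pos hk]

lemma sepX0_anti {n : ℕ} (M : Finset (Fin (n + 1))) :
    ∀ k, k + 1 < M.card → sepX0 M (k + 1) < sepX0 M k := by
  intro k hk
  rw [sepX0_pos M (by omega), sepX0_pos M (by omega)]
  have hlt : (⟨M.card - 1 - (k + 1), by omega⟩ : Fin M.card) < ⟨M.card - 1 - k, by omega⟩ := by
    simp only [Fin.mk_lt_mk]
    omega
  have h2 := (M.orderIsoOfFin rfl).strictMono hlt
  exact h2

lemma sepX0_bound {n : ℕ} (M : Finset (Fin (n + 1))) :
    ∀ k, k < M.card → sepX0 M k ≤ n := by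
  intro k hk
  rw [sepX0_pos M hk]
  exact Fin.is_le _

lemma sepX0_mem {n : ℕ} (M : Finset (Fin (n + 1))) {k : ℕ} (hk : k < M.card) :
    mkF n (sepX0 M k) ∈ M := by
  have hv : mkF n (sepX0 M k)
      = (M.orderIsoOfFin rfl ⟨M.card - 1 - k, by omega⟩ : Fin (n + 1)) := by
    apply Fin.ext
    rw [mkF_val (sepX0_bound M k hk), sepX0_pos M hk]
  rw [hv]
  exact (M.orderIsoOfFin rfl _).2

lemma sepX0_surj {n : ℕ} (M : Finset (Fin (n + 1))) {i : Fin (n + 1)} (hi : i ∈ M) :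
    ∃ k, k < M.card ∧ sepX0 M k = (i : ℕ) := by
  have hj := ((M.orderIsoOfFin rfl).symm ⟨i, hi⟩).2
  refine ⟨M.card - 1 - ((M.orderIsoOfFin rfl).symm ⟨i, hi⟩ : ℕ), by omega, ?_⟩
  rw [sepX0_pos M (by omega)]
  have hjj : (⟨M.card - 1 - (M.card - 1 - ((M.orderIsoOfFin rfl).symm ⟨i, hi⟩ : ℕ)), by omega⟩
      : Fin M.card) = (M.orderIsoOfFin rfl).symm ⟨i, hi⟩ := by
    apply Fin.ext
    simp only []
    omega
  rw [hjj]
  simp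

/-- separation: any marked set can be moved to the top block within `n+1` rounds -/
lemma sep_routable (n : ℕ) (M : Finset (Fin (n + 1))) :
    ∃ π : Equiv.Perm (Fin (n + 1)), Routable (LineAdj (n + 1)) Set.univ (n + 1) π ∧
      ∀ i : Fin (n + 1), (i ∈ M ↔ n + 1 - M.card ≤ (π i : ℕ)) := by
  classical
  have hanti := sepX0_anti M
  have hbound := sepX0_bound M
  refine ⟨tasepPerm n M.card (sepX0 M) (n + 1), tasep_routable hanti hbound, ?_⟩
  have hfwd : ∀ k, k < M.card →
      tasepPerm n M.card (sepX0 M) (n + 1) (mkF n (sepX0 M k)) = mkF n (n - k) :=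
    fun k hk => tasep_final hanti hbound hk
  intro i
  constructor
  · intro hi
    obtain ⟨k, hk, hkv⟩ := sepX0_surj M hi
    have hik : i = mkF n (sepX0 M k) := Fin.ext (by rw [mkF_val (hbound k hk), hkv])
    rw [hik, hfwd k hk, mkF_val (by omega)]
    have hkey := tasep_key hanti hbound k hk
    omega
  · intro hi
    by_contra hniM
    have hile : (tasepPerm n M.card (sepX0 M) (n + 1) i : ℕ) ≤ n := Fin.is_le _
    have hks : n - (tasepPerm n M.card (sepX0 M) (n + 1) i : ℕ) < M.card := by omega
    have heq1 : tasepPerm n M.card (sepX0 M) (n + 1)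
        (mkF n (sepX0 M (n - (tasepPerm n M.card (sepX0 M) (n + 1) i : ℕ))))
        = tasepPerm n M.card (sepX0 M) (n + 1) i := by
      rw [hfwd _ hks]
      apply Fin.ext
      rw [mkF_val (by omega)]
      omega
    have heq := (tasepPerm n M.card (sepX0 M) (n + 1)).injective heq1
    rw [← heq] at hniM
    exact hniM (sepX0_mem M hks)

/-- 1-D routing: every permutation of a line of `n` sites is a product of `3n` rounds -/
lemma line_routable : ∀ n : ℕ, ∀ σ : Equiv.Perm (Fin n),
    Routable (LineAdj n) Set.univ (3 * n) σ := by
  intro n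
  induction n using Nat.strong_induction_on with
  | _ n ih =>
    intro σ
    match n, σ, ih with
    | 0, σ, ih =>
      have hσ : σ = 1 := Equiv.ext fun x => x.elim0
      rw [hσ]; exact routable_one
    | 1, σ, ih =>
      have hσ : σ = 1 := Equiv.ext fun x => Subsingleton.elim _ _
      rw [hσ]; exact routable_one
    | (m + 2), σ, ih =>
      have hh1 : 1 ≤ (m + 2) / 2 := by omega
      have hhN : (m + 2) / 2 < m + 2 := by omega
      classical
      set h := (m + 2) / 2 with hh
      set M : Finset (Fin (m + 2)) := Finset.univ.filter (fun i => h ≤ (σ i : ℕ)) with hM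
      have hcard : M.card = (m + 2) - h := by
        rw [hM, card_filter_comp_perm σ (fun j => h ≤ (j : ℕ)), card_filter_le_val (by omega)]
      obtain ⟨π, hπr, hπ⟩ := sep_routable (m + 1) M
      have hπ' : ∀ i : Fin (m + 2), (h ≤ (σ i : ℕ) ↔ h ≤ (π i : ℕ)) := by
        intro i
        have h1 := hπ i
        rw [hcard] at h1
        have hMi : i ∈ M ↔ h ≤ (σ i : ℕ) := by simp [hM]
        constructor
        · intro hle
          have := h1.mp (hMi.mpr hle)
          omega
        · intro hle
          exact hMi.mp (h1.mpr (by omega))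
      have hfib : ∀ x : Fin (m + 2),
          (decide (((σ * π⁻¹) x : ℕ) < h)) = (decide ((x : ℕ) < h)) := by
        intro x
        have h2 := hπ' (π⁻¹ x)
        rw [Equiv.Perm.apply_inv_self] at h2
        have h3 : (σ (π⁻¹ x) : ℕ) < h ↔ (x : ℕ) < h := by omega
        simp only [Equiv.Perm.mul_apply]
        exact decide_eq_decide.mpr h3
      have hroute2 : Routable (LineAdj (m + 2)) Set.univ (3 * ((m + 2) - h)) (σ * π⁻¹) := by
        apply routable_fiber (I := Bool) (fun x : Fin (m + 2) => decide ((x : ℕ) < h)) (σ * π⁻¹)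
          (fun x => hfib x) (3 * ((m + 2) - h))
          (fun b => Fin (cond b h ((m + 2) - h))) (fun b => LineAdj (cond b h ((m + 2) - h)))
          (fun b => match b with
            | true =>
              { toFun := fun k => by
                  have hk2 : (k : ℕ) < h := k.2
                  exact ⟨⟨(k : ℕ), by omega⟩, by
                    simp only [decide_eq_true_eq]
                    show (k : ℕ) < h
                    exact hk2⟩
                invFun := fun x => ⟨(x.1 : ℕ), of_decide_eq_true x.2⟩
                left_inv := fun k => by apply Fin.ext; rfl
                right_inv := fun x => by apply Subtype.ext; apply Fin.ext; rfl }
            | false =>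
              { toFun := fun k => by
                  have hk2 : (k : ℕ) < (m + 2) - h := k.2
                  exact ⟨⟨h + (k : ℕ), by omega⟩, by
                    simp only [decide_eq_false_iff_not]
                    show ¬ (h + (k : ℕ) < h)
                    omega⟩
                invFun := fun x => ⟨(x.1 : ℕ) - h, by
                  have hx : ¬ ((x.1 : ℕ) < h) := of_decide_eq_false x.2
                  have hx2 := x.1.2
                  show (x.1 : ℕ) - h < (m + 2) - h
                  omega⟩
                left_inv := fun k => by
                  apply Fin.ext
                  show h + (k : ℕ) - h = (k : ℕ)
                  omega
                right_inv := fun x => by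
                  apply Subtype.ext; apply Fin.ext
                  have hx : ¬ ((x.1 : ℕ) < h) := of_decide_eq_false x.2
                  show h + ((x.1 : ℕ) - h) = (x.1 : ℕ)
                  omega })
          ?_ ?_
        · intro b k k' hadj
          cases b
          · rcases hadj with h' | h'
            · exact Or.inl (show h + (k : ℕ) + 1 = h + (k' : ℕ) by
                have : (k : ℕ) + 1 = (k' : ℕ) := h'
                omega)
            · exact Or.inr (show h + (k' : ℕ) + 1 = h + (k : ℕ) by
                have : (k' : ℕ) + 1 = (k : ℕ) := h'
                omega)
          · exact hadj
        · intro b hp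
          cases b
          · exact (ih ((m + 2) - h) (by omega) _)
          · exact (ih h (by omega) _).pad (by omega)
      have htot : Routable (LineAdj (m + 2)) Set.univ (3 * ((m + 2) - h) + (m + 2)) σ := by
        have h4 := hroute2.mul_append hπr
        rwa [inv_mul_cancel_right] at h4
      exact htot.pad (by omega)

end Line
section Matching
variable {A : Type*} [Fintype A] [DecidableEq A]

lemma matching_decomp : ∀ (r : ℕ) (g : A → Fin r → A),
    (∀ a' : A, ((Finset.univ : Finset (A × Fin r)).filter fun p => g p.1 p.2 = a').card = r) →
    ∃ β : A → Equiv.Perm (Fin r), ∀ t : Fin r, Function.Injective (fun a => g a (β a t)) := by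
  intro r
  induction r with
  | zero => intro g _; exact ⟨fun _ => 1, fun t => t.elim0⟩
  | succ r ih =>
    intro g hreg
    have hall : ∀ S : Finset A, S.card ≤ (S.biUnion fun a => Finset.univ.image (g a)).card := by
      intro S
      have hmapsto : ∀ p ∈ S ×ˢ (Finset.univ : Finset (Fin (r + 1))),
          g p.1 p.2 ∈ S.biUnion (fun a => Finset.univ.image (g a)) := by
        intro p hp
        rw [Finset.mem_product] at hp
        exact Finset.mem_biUnion.mpr
          ⟨p.1, hp.1, Finset.mem_image.mpr ⟨p.2, Finset.mem_univ _, rfl⟩⟩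
      have hfib := Finset.card_eq_sum_card_fiberwise hmapsto
      have hcard : (S ×ˢ (Finset.univ : Finset (Fin (r + 1)))).card = S.card * (r + 1) := by
        rw [Finset.card_product, Finset.card_univ, Fintype.card_fin]
      have hle : ∀ a' ∈ S.biUnion (fun a => Finset.univ.image (g a)),
          ((S ×ˢ (Finset.univ : Finset (Fin (r + 1)))).filter fun p => g p.1 p.2 = a').card
            ≤ r + 1 := by
        intro a' _
        calc ((S ×ˢ (Finset.univ : Finset (Fin (r + 1)))).filter
              fun p => g p.1 p.2 = a').card
            ≤ ((Finset.univ : Finset (A × Fin (r + 1))).filter fun p => g p.1 p.2 = a').card :=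
              Finset.card_le_card (Finset.filter_subset_filter _ (Finset.subset_univ _))
          _ = r + 1 := hreg a'
      have hsum := Finset.sum_le_card_nsmul _ _ _ hle
      rw [← hfib, hcard, smul_eq_mul] at hsum
      exact Nat.le_of_mul_le_mul_right hsum (by omega)
    obtain ⟨f, hfinj, hf⟩ :=
      (Finset.all_card_le_biUnion_card_iff_exists_injective
        (fun a => Finset.univ.image (g a))).mp hall
    have hfex : ∀ a, ∃ b, g a b = f a := by
      intro a
      obtain ⟨b, _, hb⟩ := Finset.mem_image.mp (hf a)
      exact ⟨b, hb⟩
    choose i hi using hfex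
    have hfsurj : Function.Surjective f := Finite.surjective_of_injective hfinj
    set g' : A → Fin r → A := fun a j => g a ((i a).succAbove j) with hg'
    have hreg' : ∀ a' : A,
        ((Finset.univ : Finset (A × Fin r)).filter fun p => g' p.1 p.2 = a').card = r := by
      intro a'
      obtain ⟨a₀, ha₀⟩ := hfsurj a'
      have hmem0 : (a₀, i a₀) ∈
          (Finset.univ : Finset (A × Fin (r + 1))).filter (fun p => g p.1 p.2 = a') := by
        rw [Finset.mem_filter]
        exact ⟨Finset.mem_univ _, by rw [hi a₀, ha₀]⟩
      have hbij : ((Finset.univ : Finset (A × Fin r)).filter fun p => g' p.1 p.2 = a').card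
          = (((Finset.univ : Finset (A × Fin (r + 1))).filter
              fun p => g p.1 p.2 = a').erase (a₀, i a₀)).card := by
        apply Finset.card_bij (fun p _ => (p.1, (i p.1).succAbove p.2))
        · intro p hp
          rw [Finset.mem_filter] at hp
          rw [Finset.mem_erase]
          constructor
          · intro hcon
            rw [Prod.mk.injEq] at hcon
            obtain ⟨h1, h2⟩ := hcon
            rw [h1] at h2
            exact Fin.succAbove_ne _ _ h2
          · rw [Finset.mem_filter]
            exact ⟨Finset.mem_univ _, hp.2⟩
        · intro p hp q hq hpq
          rw [Prod.mk.injEq] at hpq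
          obtain ⟨h1, h2⟩ := hpq
          rw [h1] at h2
          exact Prod.ext h1 (Fin.succAbove_right_injective h2)
        · rintro ⟨a, t⟩ hat
          rw [Finset.mem_erase, Finset.mem_filter] at hat
          obtain ⟨hne, _, hgt⟩ := hat
          have htne : t ≠ i a := by
            intro hcon
            subst hcon
            have : f a = a' := by rw [← hi a, hgt]
            have haa : a = a₀ := hfinj (by rw [this, ha₀])
            exact hne (by rw [haa])
          obtain ⟨j, hj⟩ := Fin.exists_succAbove_eq htne
          refine ⟨(a, j), ?_, by simp [hj]⟩
          rw [Finset.mem_filter]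
          refine ⟨Finset.mem_univ _, ?_⟩
          show g a ((i a).succAbove j) = a'
          rw [hj, hgt]
      rw [hbij, Finset.card_erase_of_mem hmem0, hreg a']
      omega
    obtain ⟨β', hβ'⟩ := ih g' hreg'
    have hβinj : ∀ a, Function.Injective
        (fun t => Fin.lastCases (i a) (fun j => (i a).succAbove (β' a j)) t : Fin (r+1) → Fin (r+1)) := by
      intro a t1 t2 h12
      induction t1 using Fin.lastCases with
      | last =>
        induction t2 using Fin.lastCases with
        | last => rfl
        | cast j =>
          simp only [Fin.lastCases_last, Fin.lastCases_castSucc] at h12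
          exact absurd h12.symm (Fin.succAbove_ne _ _)
      | cast j =>
        induction t2 using Fin.lastCases with
        | last =>
          simp only [Fin.lastCases_last, Fin.lastCases_castSucc] at h12
          exact absurd h12 (Fin.succAbove_ne _ _)
        | cast j' =>
          simp only [Fin.lastCases_castSucc] at h12
          have := (β' a).injective (Fin.succAbove_right_injective h12)
          rw [this]
    refine ⟨fun a => Equiv.ofBijective _
      (Finite.injective_iff_bijective.mp (hβinj a)), ?_⟩
    intro t
    induction t using Fin.lastCases with
    | last =>
      intro a b hab
      simp only [Equiv.ofBijective_apply, Fin.lastCases_last] at hab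
      exact hfinj (by rw [← hi a, ← hi b, hab])
    | cast j =>
      intro a b hab
      simp only [Equiv.ofBijective_apply, Fin.lastCases_castSucc] at hab
      exact hβ' j hab

end Matching

section Clos
variable {A B : Type*} [Fintype A] [Fintype B] [DecidableEq A] [DecidableEq B]

lemma card_filter_fst {a' : A} :
    ((Finset.univ : Finset (A × B)).filter fun y => y.1 = a').card = Fintype.card B := by
  rw [← Finset.card_univ]
  apply Finset.card_bij (fun y _ => y.2)
  · intro y _; exact Finset.mem_univ _
  · intro y hy z hz hyz
    rw [Finset.mem_filter] at hy hz
    apply Prod.ext (by rw [hy.2, hz.2]) hyz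
  · intro b _
    exact ⟨(a', b), by rw [Finset.mem_filter]; exact ⟨Finset.mem_univ _, rfl⟩, rfl⟩

lemma clos_decomp (σ : Equiv.Perm (A × B)) :
    ∃ u v w : Equiv.Perm (A × B),
      (∀ x, (u x).1 = x.1) ∧ (∀ x, (v x).2 = x.2) ∧ (∀ x, (w x).1 = x.1) ∧ σ = u * v * w := by
  classical
  set eB := Fintype.equivFin B with heB
  set r := Fintype.card B with hr
  set g : A → Fin r → A := fun a t => (σ (a, eB.symm t)).1 with hg
  have hreg : ∀ a' : A,
      ((Finset.univ : Finset (A × Fin r)).filter fun p => g p.1 p.2 = a').card = r := by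
    intro a'
    have h1 : ((Finset.univ : Finset (A × Fin r)).filter fun p => g p.1 p.2 = a').card
        = ((Finset.univ : Finset (A × B)).filter fun y => y.1 = a').card := by
      apply Finset.card_bij (fun p _ => σ (p.1, eB.symm p.2))
      · intro p hp
        rw [Finset.mem_filter] at hp ⊢
        exact ⟨Finset.mem_univ _, hp.2⟩
      · intro p hp q hq hpq
        have hinj := σ.injective hpq
        rw [Prod.mk.injEq] at hinj
        obtain ⟨ha, hb⟩ := hinj
        exact Prod.ext ha (eB.symm.injective hb)
      · intro y hy
        rw [Finset.mem_filter] at hy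
        refine ⟨(((σ.symm y).1), eB (σ.symm y).2), ?_, ?_⟩
        · rw [Finset.mem_filter]
          refine ⟨Finset.mem_univ _, ?_⟩
          show (σ ((σ.symm y).1, eB.symm (eB (σ.symm y).2))).1 = a'
          rw [eB.symm_apply_apply,
            show ((σ.symm y).1, (σ.symm y).2) = σ.symm y from rfl, σ.apply_symm_apply]
          exact hy.2
        · show σ ((σ.symm y).1, eB.symm (eB (σ.symm y).2)) = y
          rw [eB.symm_apply_apply,
            show ((σ.symm y).1, (σ.symm y).2) = σ.symm y from rfl, σ.apply_symm_apply]
    rw [h1, card_filter_fst]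
  obtain ⟨β, hβ⟩ := matching_decomp r g hreg
  set βB : A → Equiv.Perm B := fun a => (Equiv.permCongr eB).symm (β a) with hβB
  have hβBt : ∀ t : B, Function.Injective (fun a => (σ (a, βB a t)).1) := by
    intro t a b hab
    apply hβ (eB t)
    have h1 : ∀ c, (σ (c, βB c t)).1 = g c (β c (eB t)) := by
      intro c
      simp only [hβB, Equiv.permCongr_symm, Equiv.permCongr_apply, Equiv.symm_symm, hg]
    show g a (β a (eB t)) = g b (β b (eB t))
    rw [← h1 a, ← h1 b]
    exact hab
  set w : Equiv.Perm (A × B) := Equiv.prodShear (Equiv.refl A) (fun a => (βB a)⁻¹) with hw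
  have hwa : ∀ x : A × B, w x = (x.1, (βB x.1)⁻¹ x.2) := fun x => rfl
  set τ : B → Equiv.Perm A := fun t => Equiv.ofBijective (fun a => (σ (a, βB a t)).1)
    (Finite.injective_iff_bijective.mp (hβBt t)) with hτ
  set v : Equiv.Perm (A × B) :=
    { toFun := fun x => (τ x.2 x.1, x.2)
      invFun := fun x => ((τ x.2)⁻¹ x.1, x.2)
      left_inv := fun x => by simp
      right_inv := fun x => by simp } with hv
  have hva : ∀ x : A × B, v x = (τ x.2 x.1, x.2) := fun x => rfl
  have hF : ∀ x : A × B, ((v * w) x).1 = (σ x).1 := by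
    intro x
    rw [Equiv.Perm.mul_apply, hwa, hva]
    show τ ((βB x.1)⁻¹ x.2) x.1 = (σ x).1
    have : τ ((βB x.1)⁻¹ x.2) x.1 = (σ (x.1, βB x.1 ((βB x.1)⁻¹ x.2))).1 := rfl
    rw [this, Equiv.Perm.apply_inv_self]
  refine ⟨σ * (v * w)⁻¹, v, w, ?_, fun x => rfl, fun x => rfl, by group⟩
  intro x
  rw [Equiv.Perm.mul_apply]
  have h2 := hF ((v * w)⁻¹ x)
  rw [Equiv.Perm.apply_inv_self] at h2
  rw [h2]

end Clos
section Cube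

lemma cubeAdjacent_symm {ν N : ℕ} (x y : Fin ν → Fin N) :
    CubeAdjacent x y → CubeAdjacent y x := by
  rintro ⟨j, h1, h2⟩
  exact ⟨j, fun i hi => (h1 i hi).symm, h2.symm⟩

/-- head/tail splitting of a cube -/
def headTail (d m : ℕ) : (Fin (d + 1) → Fin m) ≃ (Fin m × (Fin d → Fin m)) where
  toFun x := (x 0, fun j => x j.succ)
  invFun p := Fin.cons p.1 p.2
  left_inv x := by
    funext i
    induction i using Fin.cases with
    | zero => simp
    | succ j => simp
  right_inv p := by
    apply Prod.ext
    · simp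
    · funext j; simp

lemma cube_routable (m : ℕ) : ∀ d, 1 ≤ d → ∀ σ : Equiv.Perm (Fin d → Fin m),
    Routable CubeAdjacent Set.univ (4 ^ d * m) σ := by
  intro d
  induction d with
  | zero => omega
  | succ d ihd =>
    intro _ σ
    by_cases hd : d = 0
    · -- base case : a single line
      subst hd
      have hbase : Routable (CubeAdjacent (ν := 1) (N := m)) Set.univ (3 * m) σ := by
        apply routable_fiber (I := Unit) (fun _ => ()) σ (fun _ => rfl) (3 * m)
          (fun _ => Fin m) (fun _ => LineAdj m)
          (fun u =>
            { toFun := fun a => ⟨fun _ => a, Subsingleton.elim _ _⟩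
              invFun := fun x => x.1 0
              left_inv := fun a => rfl
              right_inv := fun x => Subtype.ext (funext fun i => by
                have hi : i = 0 := Subsingleton.elim (α := Fin 1) i 0
                rw [hi]) })
          ?_ ?_
        · intro u a b hab
          exact ⟨0, fun i hi => absurd (Subsingleton.elim (α := Fin 1) i 0) hi, hab⟩
        · intro u hp
          exact line_routable m _
      exact hbase.pad (by omega)
    · have hd1 : 1 ≤ d := by omega
      set E := headTail d m with hE
      obtain ⟨u, v, w, hu, hv, hw, hdec⟩ := clos_decomp (E.permCongr σ)
      have happ : ∀ (p : Equiv.Perm (Fin m × (Fin d → Fin m))) (x : Fin (d+1) → Fin m),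
          E.permCongr.symm p x = E.symm (p (E x)) := by
        intro p x
        simp [Equiv.permCongr_symm, Equiv.permCongr_apply]
      have hmul : ∀ p q : Equiv.Perm (Fin m × (Fin d → Fin m)),
          E.permCongr.symm (p * q) = E.permCongr.symm p * E.permCongr.symm q := by
        intro p q
        apply Equiv.ext
        intro x
        rw [Equiv.Perm.mul_apply, happ, happ, happ, Equiv.Perm.mul_apply]
        simp
      have hσ : σ = E.permCongr.symm u * E.permCongr.symm v * E.permCongr.symm w := by
        have h0 : σ = E.permCongr.symm (E.permCongr σ) := (E.permCongr.symm_apply_apply σ).symm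
        rw [h0, hdec, hmul, hmul]
      -- head-preserving perms are routable
      have hheadroute : ∀ p : Equiv.Perm (Fin m × (Fin d → Fin m)), (∀ x, (p x).1 = x.1) →
          Routable CubeAdjacent Set.univ (4 ^ d * m) (E.permCongr.symm p) := by
        intro p hp
        have hpres : ∀ x : Fin (d+1) → Fin m, (E.permCongr.symm p) x 0 = x 0 := by
          intro x
          rw [happ]
          show (Fin.cons (p (E x)).1 (p (E x)).2 : Fin (d+1) → Fin m) 0 = x 0
          rw [Fin.cons_zero, hp (E x)]
          rfl
        apply routable_fiber (I := Fin m) (fun x => x 0) _ hpres (4 ^ d * m)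
          (fun _ => (Fin d → Fin m)) (fun _ => CubeAdjacent)
          (fun a =>
            { toFun := fun (r : Fin d → Fin m) => ⟨Fin.cons a r, by simp⟩
              invFun := fun x => fun j => x.1 j.succ
              left_inv := fun r => by funext j; simp
              right_inv := fun x => Subtype.ext (funext fun i => by
                show (Fin.cons a (fun j => x.1 j.succ) : Fin (d+1) → Fin m) i = x.1 i
                induction i using Fin.cases with
                | zero =>
                  rw [Fin.cons_zero]
                  exact x.2.symm
                | succ j => rw [Fin.cons_succ]) })
          ?_ ?_
        · rintro a r r' ⟨j, h1, h2⟩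
          refine ⟨j.succ, ?_, ?_⟩
          · intro i hi
            induction i using Fin.cases with
            | zero => rfl
            | succ i' =>
              have : i' ≠ j := fun hc => hi (by rw [hc])
              show (Fin.cons a r : Fin (d+1) → Fin m) i'.succ
                = (Fin.cons a r' : Fin (d+1) → Fin m) i'.succ
              rw [Fin.cons_succ, Fin.cons_succ, h1 i' this]
          · show ((Fin.cons a r : Fin (d+1) → Fin m) j.succ : ℕ) + 1
                = ((Fin.cons a r' : Fin (d+1) → Fin m) j.succ : ℕ) ∨ _
            rw [Fin.cons_succ, Fin.cons_succ]
            exact h2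
        · intro a hp'
          exact ihd hd1 _
      -- tail-preserving perms are routable
      have htailroute : ∀ p : Equiv.Perm (Fin m × (Fin d → Fin m)), (∀ x, (p x).2 = x.2) →
          Routable CubeAdjacent Set.univ (3 * m) (E.permCongr.symm p) := by
        intro p hp
        have hpres : ∀ x : Fin (d+1) → Fin m,
            (fun (j : Fin d) => (E.permCongr.symm p) x j.succ) = (fun (j : Fin d) => x j.succ) := by
          intro x
          funext j
          rw [happ]
          show (Fin.cons (p (E x)).1 (p (E x)).2 : Fin (d+1) → Fin m) j.succ = x j.succ
          rw [Fin.cons_succ, hp (E x)]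
          rfl
        apply routable_fiber (I := Fin d → Fin m) (fun x => fun (j : Fin d) => x j.succ) _ hpres (3 * m)
          (fun _ => Fin m) (fun _ => LineAdj m)
          (fun b =>
            { toFun := fun a => ⟨Fin.cons a b, by funext j; simp⟩
              invFun := fun x => x.1 0
              left_inv := fun a => by simp
              right_inv := fun x => Subtype.ext (funext fun i => by
                show (Fin.cons (x.1 0) b : Fin (d+1) → Fin m) i = x.1 i
                induction i using Fin.cases with
                | zero => rw [Fin.cons_zero]
                | succ j =>
                  rw [Fin.cons_succ]
                  exact (congrFun x.2 j).symm) })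
          ?_ ?_
        · intro b a a' hab
          refine ⟨0, ?_, ?_⟩
          · intro i hi
            induction i using Fin.cases with
            | zero => exact absurd rfl hi
            | succ i' =>
              show (Fin.cons a b : Fin (d+1) → Fin m) i'.succ
                = (Fin.cons a' b : Fin (d+1) → Fin m) i'.succ
              rw [Fin.cons_succ, Fin.cons_succ]
          · show ((Fin.cons a b : Fin (d+1) → Fin m) 0 : ℕ) + 1
                = ((Fin.cons a' b : Fin (d+1) → Fin m) 0 : ℕ) ∨ _
            rw [Fin.cons_zero, Fin.cons_zero]
            exact hab
        · intro b hp'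
          exact line_routable m _
      have h4 : 4 ≤ 4 ^ d := by
        calc 4 = 4 ^ 1 := by norm_num
          _ ≤ 4 ^ d := Nat.pow_le_pow_right (by norm_num) hd1
      have htot := ((hheadroute u hu).mul_append
        ((htailroute v hv).mul_append (hheadroute w hw)))
      rw [← mul_assoc, ← hσ] at htot
      apply htot.pad
      have hle : 4 ^ d + (3 + 4 ^ d) ≤ 4 ^ (d + 1) := by
        rw [pow_succ]
        omega
      calc 4 ^ d * m + (3 * m + 4 ^ d * m) = (4 ^ d + (3 + 4 ^ d)) * m := by ring
        _ ≤ 4 ^ (d + 1) * m := Nat.mul_le_mul_right m hle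

end Cube

/-- If a permutation of `R_N` is constant on the coarser tiling into cubes of side
`δ^ε = m/N` (each fine cube stays in its coarse cube), then its Shnirelman discrete distance
to the identity is at most `C(ν) δ^ε`: there is a connecting discrete flow of that cost. -/
theorem stmt12 (ν : ℕ) (hν : 1 ≤ ν) :
    ∃ C : ℝ, 0 < C ∧ ∀ (N m : ℕ) (δ ε : ℝ) (P : Equiv.Perm (Fin ν → Fin N)),
      0 < N → 0 < m → m ∣ N → 0 < δ → δ < 1 → 0 < ε →
      (m : ℝ) = δ ^ ε * N →
      (∀ (κ : Fin ν → Fin N) (j : Fin ν), (P κ j : ℕ) / m = (κ j : ℕ) / m) →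
      ∃ L : List (Equiv.Perm (Fin ν → Fin N)),
        (∀ S ∈ L, IsSElem S) ∧ L.prod = P⁻¹ ∧
        (L.map fun S => (N : ℝ) ^ (-1 - (ν : ℝ) / 2) * Real.sqrt (swapCt S)).sum
          ≤ C * δ ^ ε := by
  refine ⟨(4 : ℝ) ^ ν, by positivity, ?_⟩
  intro N m δ ε P hN hm hdvd hδ hδ1 hε hmN hP
  obtain ⟨Q, hQ⟩ := hdvd
  have hQpos : 0 < Q := by
    rcases Nat.eq_zero_or_pos Q with h | h
    · rw [h, Nat.mul_zero] at hQ; omega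
    · exact h
  have hdiv : ∀ κ : Fin ν → Fin N, ∀ j, (κ j : ℕ) / m < Q := by
    intro κ j
    have h1 : (κ j : ℕ) < m * Q := by rw [← hQ]; exact (κ j).2
    rw [Nat.div_lt_iff_lt_mul hm, Nat.mul_comm Q m]
    exact h1
  have hPinv : ∀ κ : Fin ν → Fin N,
      (fun j => (⟨(P⁻¹ κ j : ℕ) / m, hdiv _ j⟩ : Fin Q))
        = (fun j => (⟨(κ j : ℕ) / m, hdiv _ j⟩ : Fin Q)) := by
    intro κ
    funext j
    apply Fin.ext
    show (P⁻¹ κ j : ℕ) / m = (κ j : ℕ) / m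
    have h1 := hP (P⁻¹ κ) j
    rw [Equiv.Perm.apply_inv_self] at h1
    exact h1.symm
  have hroute : Routable CubeAdjacent Set.univ (4 ^ ν * m) P⁻¹ := by
    apply routable_fiber (I := Fin ν → Fin Q)
      (fun κ => fun j => (⟨(κ j : ℕ) / m, hdiv κ j⟩ : Fin Q)) P⁻¹ hPinv (4 ^ ν * m)
      (fun _ => (Fin ν → Fin m)) (fun _ => CubeAdjacent)
      (fun q =>
        { toFun := fun (r : Fin ν → Fin m) => ⟨fun j => ⟨m * (q j : ℕ) + (r j : ℕ), by
              have h1 : (r j : ℕ) < m := (r j).2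
              have h2 : (q j : ℕ) < Q := (q j).2
              calc m * (q j : ℕ) + (r j : ℕ) < m * ((q j : ℕ) + 1) := by
                    rw [Nat.mul_succ]; omega
                _ ≤ m * Q := Nat.mul_le_mul_left m (by omega)
                _ = N := hQ.symm⟩, by
            funext j
            apply Fin.ext
            show (m * (q j : ℕ) + (r j : ℕ)) / m = (q j : ℕ)
            rw [Nat.mul_add_div hm, Nat.div_eq_of_lt (r j).2, Nat.add_zero]⟩
          invFun := fun κ => fun j => ⟨(κ.1 j : ℕ) % m, Nat.mod_lt _ hm⟩
          left_inv := fun r => by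
            funext j
            apply Fin.ext
            show (m * (q j : ℕ) + (r j : ℕ)) % m = (r j : ℕ)
            rw [Nat.mul_add_mod, Nat.mod_eq_of_lt (r j).2]
          right_inv := fun κ => by
            apply Subtype.ext
            funext j
            apply Fin.ext
            show m * (q j : ℕ) + (κ.1 j : ℕ) % m = (κ.1 j : ℕ)
            have h1 : (q j : ℕ) = (κ.1 j : ℕ) / m := by
              have := congrFun κ.2 j
              exact (congrArg Fin.val this).symm
            rw [h1, Nat.div_add_mod] })
      ?_ ?_
    · rintro q r r' ⟨j, h1, h2⟩
      refine ⟨j, ?_, ?_⟩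
      · intro i hi
        apply Fin.ext
        show m * (q i : ℕ) + (r i : ℕ) = m * (q i : ℕ) + (r' i : ℕ)
        rw [h1 i hi]
      · show (m * (q j : ℕ) + (r j : ℕ)) + 1 = m * (q j : ℕ) + (r' j : ℕ) ∨
          (m * (q j : ℕ) + (r' j : ℕ)) + 1 = m * (q j : ℕ) + (r j : ℕ)
        omega
    · intro q hp
      exact cube_routable m ν hν _
  obtain ⟨L, hlen, hrounds, hprod⟩ := hroute
  refine ⟨L, fun S hS => (hrounds S hS).1, hprod, ?_⟩
  have hNpos : (0 : ℝ) < N := by exact_mod_cast hN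
  have hterm : ∀ x ∈ (L.map fun S => (N : ℝ) ^ (-1 - (ν : ℝ) / 2) * Real.sqrt (swapCt S)),
      x ≤ (N : ℝ)⁻¹ := by
    intro x hx
    rw [List.mem_map] at hx
    obtain ⟨S, _, rfl⟩ := hx
    have h1 : (swapCt S : ℝ) ≤ (N : ℝ) ^ (ν : ℕ) := by
      have h2 : swapCt S ≤ N ^ ν := by
        calc swapCt S ≤ (Finset.univ.filter fun κ => S κ ≠ κ).card := Nat.div_le_self _ 2
          _ ≤ (Finset.univ : Finset (Fin ν → Fin N)).card := Finset.card_filter_le _ _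
          _ = N ^ ν := by
            rw [Finset.card_univ, Fintype.card_fun, Fintype.card_fin, Fintype.card_fin]
      exact_mod_cast h2
    have e1 : Real.sqrt ((N : ℝ) ^ (ν : ℝ)) = (N : ℝ) ^ ((ν : ℝ) / 2) := by
      rw [Real.sqrt_eq_rpow, ← Real.rpow_mul hNpos.le]
      ring_nf
    calc (N : ℝ) ^ (-1 - (ν : ℝ) / 2) * Real.sqrt (swapCt S)
        ≤ (N : ℝ) ^ (-1 - (ν : ℝ) / 2) * ((N : ℝ) ^ ((ν : ℝ) / 2)) := by
          apply mul_le_mul_of_nonneg_left _ (Real.rpow_nonneg hNpos.le _)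
          rw [← e1]
          apply Real.sqrt_le_sqrt
          rw [Real.rpow_natCast]
          exact h1
      _ = (N : ℝ) ^ (-1 : ℝ) := by
          rw [← Real.rpow_add hNpos]
          ring_nf
      _ = (N : ℝ)⁻¹ := Real.rpow_neg_one _
  have hsum := List.sum_le_card_nsmul _ _ hterm
  rw [List.length_map, hlen] at hsum
  calc (L.map fun S => (N : ℝ) ^ (-1 - (ν : ℝ) / 2) * Real.sqrt (swapCt S)).sum
      ≤ (4 ^ ν * m : ℕ) • (N : ℝ)⁻¹ := hsum
    _ = (4 : ℝ) ^ ν * ((m : ℝ) * (N : ℝ)⁻¹) := by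
        rw [nsmul_eq_mul]
        push_cast
        ring
    _ = (4 : ℝ) ^ ν * (δ ^ ε) := by
        rw [hmN, mul_assoc, mul_inv_cancel₀ (ne_of_gt hNpos), mul_one]
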